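/- arXiv:2010.06192 — 6 statements merged into one kernel-verified Lean document; each statement's English description precedes it below -/
import Mathlib

section
/- Let ε, α, L > 0, let w* ∈ ℝ^d, and set m := min_j |w*_j|. Let g : ℝ^d → ℝ^d be L-Lipschitz with g(w*) = 0. Let S ⊆ ℝ and let Q : ℝ → ℝ satisfy Q(x) = u whenever u ∈ S and |x − u| ≤ ε|u|, with Q applied componentwise to vectors. If w ∈ ℝ^d has every coordinate in S and ‖w − w*‖ ≤ (ε/(αL + ε))·m, then Q(w − α g(w)) = w; i.e., the entire SGD model weight update is cancelled by nearest rounding. (Theorem 1, first part.) -/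
open scoped RealInnerProductSpace BigOperators

lemma coord_abs_le_norm {d : ℕ} (x : EuclideanSpace ℝ (Fin d)) (j : Fin d) :
    |x j| ≤ ‖x‖ := by
  rw [EuclideanSpace.norm_eq]
  rw [show |x j| = Real.sqrt (|x j| ^ 2) by rw [Real.sqrt_sq_eq_abs, abs_abs]]
  apply Real.sqrt_le_sqrt
  rw [sq_abs]
  exact Finset.single_le_sum (f := fun i => (x i) ^ 2) (fun i _ => sq_nonneg _)
    (Finset.mem_univ j) |>.trans_eq (by simp [sq_abs])

/-- Theorem 1 (first part): nearest rounding cancels the entire SGD model weight update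
when the iterate is close enough to the optimum. -/
theorem nearest_rounding_cancels_update
    {d : ℕ} (hd : 0 < d) (ε α L : ℝ) (hε : 0 < ε) (hα : 0 < α) (hL : 0 < L)
    (wstar : EuclideanSpace ℝ (Fin d)) (m : ℝ) (hm : m = ⨅ j, |wstar j|)
    (g : EuclideanSpace ℝ (Fin d) → EuclideanSpace ℝ (Fin d))
    (hg : ∀ u v, ‖g u - g v‖ ≤ L * ‖u - v‖)
    (hgstar : g wstar = 0)
    (S : Set ℝ) (Q : ℝ → ℝ)
    (hQ : ∀ x u, u ∈ S → |x - u| ≤ ε * |u| → Q x = u)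
    (w : EuclideanSpace ℝ (Fin d))
    (hwS : ∀ j, w j ∈ S)
    (hdist : ‖w - wstar‖ ≤ ε / (α * L + ε) * m) :
    (fun j => Q ((w - α • g w) j)) = w := by
  haveI : Nonempty (Fin d) := ⟨⟨0, hd⟩⟩
  set D := ‖w - wstar‖ with hD
  have hD0 : 0 ≤ D := norm_nonneg _
  have hden : 0 < α * L + ε := by positivity
  have hDm : D * (α * L + ε) ≤ ε * m := by
    have := mul_le_mul_of_nonneg_right hdist hden.le
    calc D * (α * L + ε) ≤ (ε / (α * L + ε) * m) * (α * L + ε) := this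
      _ = ε * m := by field_simp
  have hgw : ‖g w‖ ≤ L * D := by
    have := hg w wstar
    rwa [hgstar, sub_zero] at this
  funext j
  apply hQ _ _ (hwS j)
  have hmj : m ≤ |wstar j| := hm ▸ ciInf_le (Finite.bddBelow_range _) j
  have hwj : m - D ≤ |w j| := by
    have h1 : |w j - wstar j| ≤ D := coord_abs_le_norm (w - wstar) j
    have h2 : |wstar j| - |w j - wstar j| ≤ |w j| := by
      have := abs_sub_abs_le_abs_sub (wstar j) (w j)
      rw [abs_sub_comm] at this
      linarith
    linarith
  have hgj : |g w j| ≤ L * D := (coord_abs_le_norm (g w) j).trans hgw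
  have hcoord : (w - α • g w) j - w j = -(α * g w j) := by
    simp [PiLp.sub_apply, PiLp.smul_apply]
  rw [hcoord, abs_neg, abs_mul, abs_of_pos hα]
  nlinarith [abs_nonneg (g w j), abs_nonneg (w j)]
end

section
/- Let ε, α, L > 0, let w* ∈ ℝ^d with m := min_j |w*_j|, and let g_1,…,g_n : ℝ^d → ℝ^d each be L-Lipschitz with g_i(w*) = 0. Let S ⊆ ℝ and Q : ℝ → ℝ satisfy Q(x) = u whenever u ∈ S and |x − u| ≤ ε|u|, with Q applied componentwise. Let σ : ℕ → {1,…,n} be any index sequence and define iterates w_{t+1} = Q(w_t − α g_{σ(t)}(w_t)). If at some time T the iterate w_T has every coordinate in S and ‖w_T − w*‖ ≤ (ε/(αL + ε))·m, then the iterates halt: w_t = w_T for all t ≥ T, and in particular ‖w_t − w*‖ = ‖w_T − w*‖ for all t ≥ T. -/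
open scoped RealInnerProductSpace BigOperators

/-- Once a nearest-rounded SGD iterate enters the quantization noise ball with all
coordinates representable, the iterates halt there forever. -/
theorem nearest_rounding_iterates_halt
    {d n : ℕ} (hd : 0 < d) (ε α L : ℝ) (hε : 0 < ε) (hα : 0 < α) (hL : 0 < L)
    (wstar : EuclideanSpace ℝ (Fin d)) (m : ℝ) (hm : m = ⨅ j, |wstar j|)
    (g : Fin n → EuclideanSpace ℝ (Fin d) → EuclideanSpace ℝ (Fin d))
    (hg : ∀ i, ∀ u v, ‖g i u - g i v‖ ≤ L * ‖u - v‖)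
    (hgstar : ∀ i, g i wstar = 0)
    (S : Set ℝ) (Q : ℝ → ℝ)
    (hQfix : ∀ x u, u ∈ S → |x - u| ≤ ε * |u| → Q x = u)
    (σ : ℕ → Fin n)
    (w : ℕ → EuclideanSpace ℝ (Fin d))
    (hiter : ∀ t, w (t + 1) = fun j => Q ((w t - α • g (σ t) (w t)) j))
    (T : ℕ)
    (hwTS : ∀ j, w T j ∈ S)
    (hdist : ‖w T - wstar‖ ≤ ε / (α * L + ε) * m) :
    ∀ t : ℕ, T ≤ t → w t = w T ∧ ‖w t - wstar‖ = ‖w T - wstar‖ := by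
  have hALε : 0 < α * L + ε := by positivity
  set D := ‖w T - wstar‖ with hD
  have hDnn : 0 ≤ D := norm_nonneg _
  -- key inequality: (αL + ε) D ≤ ε m
  have hkey : (α * L + ε) * D ≤ ε * m := by
    have := mul_le_mul_of_nonneg_left hdist (le_of_lt hALε)
    calc (α * L + ε) * D ≤ (α * L + ε) * (ε / (α * L + ε) * m) := this
      _ = ε * m := by field_simp
  -- lower bound on each coordinate of w T
  have hcoord : ∀ j, α * L * D ≤ ε * |w T j| := by
    intro j
    have hmj : m ≤ |wstar j| := by
      rw [hm]
      exact ciInf_le ⟨0, fun x hx => by rcases hx with ⟨i, rfl⟩; positivity⟩ j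
    have h1 : |wstar j| - |w T j| ≤ D := by
      have := coord_abs_le_norm (w T - wstar) j
      have h2 : |wstar j - w T j| ≤ D := by
        have : |(w T - wstar) j| = |w T j - wstar j| := by
          congr 1
        rw [this] at *
        calc |wstar j - w T j| = |w T j - wstar j| := by rw [abs_sub_comm]
          _ ≤ D := by simpa [this] using coord_abs_le_norm (w T - wstar) j
      linarith [abs_sub_abs_le_abs_sub (wstar j) (w T j)]
    have : m - D ≤ |w T j| := by linarith
    have hεmD : ε * (m - D) ≤ ε * |w T j| :=
      mul_le_mul_of_nonneg_left this (le_of_lt hε)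
    nlinarith
  -- one-step fixation at w T
  have hstep : ∀ t, w t = w T → w (t + 1) = w T := by
    intro t hwt
    have hgb : ‖g (σ t) (w T)‖ ≤ L * D := by
      have := hg (σ t) (w T) wstar
      simpa [hgstar (σ t)] using this
    apply WithLp.ofLp_injective
    rw [hiter t, hwt]
    funext j
    apply hQfix _ _ (hwTS j)
    have : (w T - α • g (σ t) (w T)) j - w T j = -(α * g (σ t) (w T) j) := by
      simp only [PiLp.sub_apply, PiLp.smul_apply, smul_eq_mul]
      ring
    rw [this, abs_neg, abs_mul, abs_of_pos hα]
    have hgj : |g (σ t) (w T) j| ≤ L * D := le_trans (coord_abs_le_norm _ j) hgb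
    calc α * |g (σ t) (w T) j| ≤ α * (L * D) :=
          mul_le_mul_of_nonneg_left hgj (le_of_lt hα)
      _ = α * L * D := by ring
      _ ≤ ε * |w T j| := hcoord j
  -- induction
  have heq : ∀ k, w (T + k) = w T := by
    intro k
    induction k with
    | zero => rfl
    | succ k ih => rw [← Nat.add_assoc]; exact hstep (T + k) ih
  intro t ht
  obtain ⟨k, rfl⟩ := Nat.exists_eq_add_of_le ht
  exact ⟨heq k, by rw [heq k]⟩
end

section
/- Let ε, L > 0, let x, w, w* ∈ ℝ^d with ‖x‖² ≤ L, let y = xᵀw*, and let Q : ℝ → ℝ satisfy |Q(u) − u| ≤ ε|u| for all u, applied componentwise to vectors. Define the fully rounded computed gradient ∇_Q := Q( Q(xᵀw − y)·x ) (outer Q componentwise). Then ‖∇_Q − (xᵀw − y)·x‖ ≤ ε(2 + ε)·L·‖w − w*‖. (Rigorous form of the paper's bound 2εL‖w − w*‖, which disregards the ε² term.) -/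
open scoped RealInnerProductSpace BigOperators

lemma euclid_norm_le_of_abs_le {d : ℕ} (c : ℝ) (hc : 0 ≤ c)
    (v u : EuclideanSpace ℝ (Fin d)) (h : ∀ j, |v j| ≤ c * |u j|) :
    ‖v‖ ≤ c * ‖u‖ := by
  rw [EuclideanSpace.norm_eq, EuclideanSpace.norm_eq,
    ← Real.sqrt_sq hc, ← Real.sqrt_mul (by positivity)]
  apply Real.sqrt_le_sqrt
  rw [Finset.mul_sum]
  apply Finset.sum_le_sum
  intro j _
  have hj := h j
  have h1 : ‖v j‖ = |v j| := Real.norm_eq_abs _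
  have h2 : ‖u j‖ = |u j| := Real.norm_eq_abs _
  rw [h1, h2]
  nlinarith [abs_nonneg (v j), abs_nonneg (u j)]

/-- Bound on the error of the fully rounded computed gradient
`∇_Q = Q(Q(xᵀw − y)·x)` for interpolating least squares (rigorous form of the
paper's bound `2εL‖w − w*‖`). -/
theorem fully_rounded_gradient_error_bound
    {d : ℕ} (ε L : ℝ) (hε : 0 < ε) (hL : 0 < L)
    (x w wstar : EuclideanSpace ℝ (Fin d))
    (hx : ‖x‖ ^ 2 ≤ L)
    (y : ℝ) (hy : y = ⟪x, wstar⟫)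
    (Q : ℝ → ℝ) (hQ : ∀ u : ℝ, |Q u - u| ≤ ε * |u|)
    (gradQ : EuclideanSpace ℝ (Fin d))
    (hgradQ : gradQ = fun j => Q ((Q (⟪x, w⟫ - y) • x) j)) :
    ‖gradQ - (⟪x, w⟫ - y) • x‖ ≤ ε * (2 + ε) * L * ‖w - wstar‖ := by
  set e : ℝ := ⟪x, w⟫ - y with he
  set a : ℝ := Q e with ha
  -- |e| ≤ ‖x‖ * ‖w - wstar‖
  have hex : e = ⟪x, w - wstar⟫ := by
    rw [he, hy, inner_sub_right]
  have hebound : |e| ≤ ‖x‖ * ‖w - wstar‖ := by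
    rw [hex]
    exact abs_real_inner_le_norm x (w - wstar)
  have hae : |a - e| ≤ ε * |e| := hQ e
  have haabs : |a| ≤ (1 + ε) * |e| := by
    have := abs_sub_abs_le_abs_sub a e
    nlinarith [abs_nonneg e]
  -- first part: ‖gradQ - a • x‖ ≤ ε * |a| * ‖x‖
  have h1 : ‖gradQ - a • x‖ ≤ (ε * |a|) * ‖x‖ := by
    apply euclid_norm_le_of_abs_le _ (by positivity)
    intro j
    have hc : (gradQ - a • x) j = Q (a * x j) - a * x j := by
      rw [PiLp.sub_apply, hgradQ]
      simp [PiLp.sub_apply, PiLp.smul_apply, smul_eq_mul]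
    rw [hc]
    calc |Q (a * x j) - a * x j| ≤ ε * |a * x j| := hQ _
      _ = ε * |a| * |x j| := by rw [abs_mul, mul_assoc]
  have h2 : ‖(a - e) • x‖ ≤ ε * |e| * ‖x‖ := by
    rw [norm_smul, Real.norm_eq_abs]
    exact mul_le_mul_of_nonneg_right hae (norm_nonneg x)
  have hsplit : gradQ - e • x = (gradQ - a • x) + (a - e) • x := by
    module
  have htot : ‖gradQ - e • x‖ ≤ ε * (2 + ε) * |e| * ‖x‖ := by
    rw [hsplit]
    calc ‖(gradQ - a • x) + (a - e) • x‖ ≤ ‖gradQ - a • x‖ + ‖(a - e) • x‖ :=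
          norm_add_le _ _
      _ ≤ (ε * |a|) * ‖x‖ + ε * |e| * ‖x‖ := add_le_add h1 h2
      _ ≤ ε * (2 + ε) * |e| * ‖x‖ := by
          nlinarith [mul_le_mul_of_nonneg_right haabs (norm_nonneg x), hε.le,
            abs_nonneg e, norm_nonneg x, mul_nonneg (abs_nonneg e) (norm_nonneg x)]
  calc ‖gradQ - e • x‖ ≤ ε * (2 + ε) * |e| * ‖x‖ := htot
    _ = ε * (2 + ε) * (|e| * ‖x‖) := by ring
    _ ≤ ε * (2 + ε) * (L * ‖w - wstar‖) := by
        apply mul_le_mul_of_nonneg_left _ (by positivity : (0:ℝ) ≤ ε * (2 + ε))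
        nlinarith [mul_le_mul_of_nonneg_right hebound (norm_nonneg x),
          mul_le_mul_of_nonneg_right hx (norm_nonneg (w - wstar)),
          norm_nonneg x, norm_nonneg (w - wstar)]
    _ = ε * (2 + ε) * L * ‖w - wstar‖ := by ring
end

section
/- Let x_1,…,x_n ∈ ℝ^d with ‖x_i‖² ≤ L, let α ≥ 0 with αL ≤ 1, and let μ ≥ 0 satisfy (1/n)Σ_i⟨x_i, v⟩² ≥ μ‖v‖² for all v ∈ ℝ^d. Let w, w* ∈ ℝ^d, let δ ≥ 0, and let η_1,…,η_n ∈ ℝ^d be perturbation vectors with ‖η_i‖ ≤ δ‖w − w*‖ for each i. Define the perturbed SGD outcomes w'_i := w − α⟨x_i, w − w*⟩·x_i + η_i. Then the expected squared distance over a uniformly random index contracts: (1/n)·Σ_{i=1}^n ‖w'_i − w*‖² ≤ (1 − αμ + 2δ + δ²)·‖w − w*‖². (With δ = 2αεL this is the paper's one-step bound E‖w_{t+1} − w*‖² ≤ (1 − αμ + 4αεL + 4α²ε²L²)‖w_t − w*‖².) -/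
open scoped RealInnerProductSpace BigOperators

/-- One-step expected contraction of perturbed least-squares SGD: with per-sample
perturbations of relative magnitude at most `δ`, the expected squared distance to the
optimum contracts by `(1 − αμ + 2δ + δ²)`. -/
theorem perturbed_sgd_one_step_contraction
    {d n : ℕ} (α L μ δ : ℝ) (hL : 0 < L) (hα : 0 ≤ α) (hαL : α * L ≤ 1)
    (hμ : 0 ≤ μ) (hδ : 0 ≤ δ)
    (x : Fin n → EuclideanSpace ℝ (Fin d))
    (hx : ∀ i, ‖x i‖ ^ 2 ≤ L)
    (heig : ∀ v : EuclideanSpace ℝ (Fin d),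
      μ * ‖v‖ ^ 2 ≤ (1 / (n : ℝ)) * ∑ i : Fin n, ⟪x i, v⟫ ^ 2)
    (w wstar : EuclideanSpace ℝ (Fin d))
    (η : Fin n → EuclideanSpace ℝ (Fin d))
    (hη : ∀ i, ‖η i‖ ≤ δ * ‖w - wstar‖)
    (w' : Fin n → EuclideanSpace ℝ (Fin d))
    (hw' : ∀ i, w' i = w - (α * ⟪x i, w - wstar⟫) • x i + η i) :
    (1 / (n : ℝ)) * ∑ i : Fin n, ‖w' i - wstar‖ ^ 2 ≤
      (1 - α * μ + 2 * δ + δ ^ 2) * ‖w - wstar‖ ^ 2 := by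
  set v := w - wstar with hv
  have hkey : ∀ i, ‖w' i - wstar‖ ^ 2 ≤
      ‖v‖ ^ 2 - α * ⟪x i, v⟫ ^ 2 + (2 * δ + δ ^ 2) * ‖v‖ ^ 2 := by
    intro i
    set t := ⟪x i, v⟫ with ht
    set u := v - (α * t) • x i with hu
    have hαx : α * ‖x i‖ ^ 2 ≤ 1 :=
      le_trans (mul_le_mul_of_nonneg_left (hx i) hα) hαL
    have husq : ‖u‖ ^ 2 ≤ ‖v‖ ^ 2 - α * t ^ 2 := by
      have h1 : ‖u‖ ^ 2 = ‖v‖ ^ 2 - 2 * ((α * t) * t) + (α * t) ^ 2 * ‖x i‖ ^ 2 := by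
        rw [hu, norm_sub_sq_real, real_inner_smul_right, norm_smul]
        rw [real_inner_comm, ← ht]
        simp [mul_pow, sq_abs]
      nlinarith [sq_nonneg t, mul_nonneg hα (sq_nonneg t), norm_nonneg (x i),
        sq_nonneg (‖x i‖)]
    have hule : ‖u‖ ≤ ‖v‖ := by
      nlinarith [norm_nonneg u, norm_nonneg v, mul_nonneg hα (sq_nonneg t)]
    have hwu : w' i - wstar = u + η i := by
      rw [hw' i, hu, hv, ← ht]
      abel
    have htri : ‖w' i - wstar‖ ≤ ‖u‖ + ‖η i‖ := by
      rw [hwu]; exact norm_add_le _ _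
    have hηi := hη i
    have h2 : ‖w' i - wstar‖ ^ 2 ≤ (‖u‖ + ‖η i‖) ^ 2 := by
      have := norm_nonneg (w' i - wstar)
      nlinarith [norm_nonneg u, norm_nonneg (η i)]
    nlinarith [norm_nonneg u, norm_nonneg (η i), norm_nonneg v,
      mul_nonneg hδ (norm_nonneg v)]
  rcases Nat.eq_zero_or_pos n with hn | hn
  · subst hn
    simp only [Finset.univ_eq_empty, Finset.sum_empty, mul_zero]
    have h0 := heig v
    simp only [Nat.cast_zero, Finset.univ_eq_empty, Finset.sum_empty, mul_zero] at h0
    nlinarith [sq_nonneg ‖v‖, mul_nonneg hδ (sq_nonneg ‖v‖),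
      mul_nonneg (mul_nonneg hδ hδ) (sq_nonneg ‖v‖), mul_nonneg hμ (sq_nonneg ‖v‖), h0, hα]
  · have hn' : (0:ℝ) < n := by exact_mod_cast hn
    have hsum : ∑ i : Fin n, ‖w' i - wstar‖ ^ 2 ≤
        ∑ i : Fin n, (‖v‖ ^ 2 - α * ⟪x i, v⟫ ^ 2 + (2 * δ + δ ^ 2) * ‖v‖ ^ 2) :=
      Finset.sum_le_sum fun i _ => hkey i
    have hsplit : ∑ i : Fin n, (‖v‖ ^ 2 - α * ⟪x i, v⟫ ^ 2 + (2 * δ + δ ^ 2) * ‖v‖ ^ 2)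
        = (n : ℝ) * ((1 + 2 * δ + δ ^ 2) * ‖v‖ ^ 2)
          - α * ∑ i : Fin n, ⟪x i, v⟫ ^ 2 := by
      rw [Finset.sum_add_distrib, Finset.sum_sub_distrib, Finset.sum_const,
        Finset.sum_const, ← Finset.mul_sum]
      simp [Finset.card_univ]
      ring
    have heigv := heig v
    have hmono : (1 / (n:ℝ)) * ∑ i : Fin n, ‖w' i - wstar‖ ^ 2 ≤
        (1 / (n:ℝ)) * ((n : ℝ) * ((1 + 2 * δ + δ ^ 2) * ‖v‖ ^ 2)
          - α * ∑ i : Fin n, ⟪x i, v⟫ ^ 2) := by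
      rw [← hsplit]
      exact mul_le_mul_of_nonneg_left hsum (by positivity)
    have hrw : (1 / (n:ℝ)) * ((n : ℝ) * ((1 + 2 * δ + δ ^ 2) * ‖v‖ ^ 2)
          - α * ∑ i : Fin n, ⟪x i, v⟫ ^ 2)
        = (1 + 2 * δ + δ ^ 2) * ‖v‖ ^ 2
          - α * ((1 / (n:ℝ)) * ∑ i : Fin n, ⟪x i, v⟫ ^ 2) := by
      field_simp
    rw [hrw] at hmono
    have hα2 : α * (μ * ‖v‖ ^ 2) ≤ α * ((1 / (n:ℝ)) * ∑ i : Fin n, ⟪x i, v⟫ ^ 2) :=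
      mul_le_mul_of_nonneg_left heigv hα
    calc (1 / (n:ℝ)) * ∑ i : Fin n, ‖w' i - wstar‖ ^ 2
        ≤ (1 + 2 * δ + δ ^ 2) * ‖v‖ ^ 2
          - α * ((1 / (n:ℝ)) * ∑ i : Fin n, ⟪x i, v⟫ ^ 2) := hmono
      _ ≤ (1 - α * μ + 2 * δ + δ ^ 2) * ‖v‖ ^ 2 := by nlinarith
end

section
/- Consider interpolating least-squares regression: x_1,…,x_n ∈ ℝ^d with ‖x_i‖² ≤ L, labels y_i = x_iᵀw*, covariance eigenvalue bound (1/n)Σ_i⟨x_i, v⟩² ≥ μ‖v‖² for all v (μ ≥ 0), step size 0 < α ≤ 1/L, and a rounding function Q : ℝ → ℝ with |Q(u) − u| ≤ ε|u| for all u (ε > 0), applied componentwise to vectors. For an index sequence σ ∈ {1,…,n}^T and initial point w_0 ∈ ℝ^d, define SGD with nearest rounding only in the forward and backward compute and exact weight-update arithmetic: w_{t+1}^σ = w_t^σ − α·Q( Q(x_{σ(t)}ᵀ w_t^σ − y_{σ(t)})·x_{σ(t)} ). Then the uniform average over all index sequences satisfies (1/n^T)·Σ_{σ ∈ {1,…,n}^T}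 ‖w_T^σ − w*‖² ≤ (1 − αμ + 2αε(2+ε)L + α²ε²(2+ε)²L²)^T · ‖w_0 − w*‖². (Rigorous form of Theorem 2, which disregards ε² terms to get the factor (1 − αμ + 4αεL).) -/
open scoped RealInnerProductSpace BigOperators

set_option maxHeartbeats 2000000

private lemma euc_norm_sq {d : ℕ} (v : EuclideanSpace ℝ (Fin d)) : ‖v‖^2 = ∑ j, v j ^2 := by
  rw [← real_inner_self_eq_norm_sq]
  rw [PiLp.inner_apply]; simp [sq]

private lemma sqrt_mono_sq {a b : ℝ} (ha : 0 ≤ a) (hb : 0 ≤ b) (h : a^2 ≤ b^2) : a ≤ b := by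
  calc a = Real.sqrt (a^2) := (Real.sqrt_sq ha).symm
  _ ≤ Real.sqrt (b^2) := Real.sqrt_le_sqrt h
  _ = b := Real.sqrt_sq hb

private lemma stepA {d : ℕ} (ε α L : ℝ) (hε : 0 < ε) (hα : 0 < α)
    (hαL : α * L ≤ 1)
    (xi : EuclideanSpace ℝ (Fin d)) (hxi : ‖xi‖^2 ≤ L)
    (Q : ℝ → ℝ) (hQ : ∀ u, |Q u - u| ≤ ε * |u|)
    (e : EuclideanSpace ℝ (Fin d)) (c : ℝ) (hc : c = ⟪xi, e⟫) :
    ‖e - α • (show EuclideanSpace ℝ (Fin d) from WithLp.toLp 2 (fun j => Q ((Q c • xi) j)))‖^2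
      ≤ (1 + 2*α*(ε*(2+ε))*L + α^2*(ε*(2+ε))^2*L^2) * ‖e‖^2 - α * ⟪xi, e⟫^2 := by
  set r : ℝ := ⟪xi, e⟫ with hr
  set β : ℝ := ε*(2+ε) with hβdef
  have hβ : 0 ≤ β := by nlinarith
  subst hc
  set g : EuclideanSpace ℝ (Fin d) := WithLp.toLp 2 (fun j => Q ((Q r • xi) j)) with hg
  have hQr : |Q r| ≤ (1+ε) * |r| := by
    have h1 := hQ r
    have h2 : |Q r| ≤ |Q r - r| + |r| := by
      calc |Q r| = |Q r - r + r| := by congr 1; ring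
      _ ≤ |Q r - r| + |r| := abs_add_le _ _
    have := abs_nonneg r
    linarith
  set δ : EuclideanSpace ℝ (Fin d) := g - r • xi with hδ
  have hδj : ∀ j, |δ j| ≤ β * |r| * |xi j| := by
    intro j
    have hδval : δ j = Q (Q r * xi j) - r * xi j := by
      simp [hδ, hg, PiLp.smul_apply, smul_eq_mul]
    rw [hδval]
    have h1 := hQ (Q r * xi j)
    have h2 := hQ r
    have key : |Q (Q r * xi j) - r * xi j|
        ≤ |Q (Q r * xi j) - Q r * xi j| + |Q r * xi j - r * xi j| := abs_sub_le _ _ _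
    have e1 : |Q r * xi j| = |Q r| * |xi j| := abs_mul _ _
    have e2 : |Q r * xi j - r * xi j| = |Q r - r| * |xi j| := by
      rw [← sub_mul, abs_mul]
    have hxa := abs_nonneg (xi j)
    have hra := abs_nonneg r
    have hmul := mul_le_mul_of_nonneg_right hQr hxa
    have hb1 : |Q (Q r * xi j) - Q r * xi j| ≤ ε * ((1+ε) * |r|) * |xi j| := by
      calc |Q (Q r * xi j) - Q r * xi j| ≤ ε * |Q r * xi j| := h1
      _ = ε * (|Q r| * |xi j|) := by rw [e1]
      _ ≤ ε * ((1+ε) * |r|) * |xi j| := by nlinarith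
    have hb2 : |Q r * xi j - r * xi j| ≤ ε * |r| * |xi j| := by
      rw [e2]; nlinarith
    calc |Q (Q r * xi j) - r * xi j|
        ≤ ε * ((1+ε) * |r|) * |xi j| + ε * |r| * |xi j| := by linarith
    _ = β * |r| * |xi j| := by rw [hβdef]; ring
  have hδnorm : ‖δ‖ ≤ β * |r| * ‖xi‖ := by
    have hsq : ‖δ‖^2 ≤ (β * |r| * ‖xi‖)^2 := by
      have expand : (β * |r| * ‖xi‖)^2 = (β * |r|)^2 * ‖xi‖^2 := by ring
      rw [expand, euc_norm_sq δ, euc_norm_sq xi, Finset.mul_sum]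
      apply Finset.sum_le_sum
      intro j _
      have := hδj j
      nlinarith [sq_abs (δ j), sq_abs (xi j), abs_nonneg (δ j), abs_nonneg (xi j),
        mul_nonneg (mul_nonneg hβ (abs_nonneg r)) (abs_nonneg (xi j))]
    exact sqrt_mono_sq (norm_nonneg _) (by positivity) hsq
  show ‖e - α • g‖^2 ≤ (1 + 2*α*β*L + α^2*β^2*L^2) * ‖e‖^2 - α * r^2
  have hupdate : e - α • g = (e - (α*r) • xi) - α • δ := by
    rw [hδ, smul_sub, mul_smul]; abel
  rw [hupdate]
  set a : EuclideanSpace ℝ (Fin d) := e - (α*r) • xi with hadef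
  have ha2 : ‖a‖^2 = ‖e‖^2 - 2*((α*r)*r) + (α*r)^2*‖xi‖^2 := by
    rw [hadef, norm_sub_sq_real, real_inner_smul_right, real_inner_comm, ← hr,
      norm_smul, Real.norm_eq_abs, mul_pow, sq_abs]
  have hαxi : α * ‖xi‖^2 ≤ 1 := le_trans (mul_le_mul_of_nonneg_left hxi hα.le) hαL
  have ha_le : ‖a‖^2 ≤ ‖e‖^2 - α*r^2 := by
    rw [ha2]
    nlinarith [mul_nonneg hα.le (sq_nonneg r)]
  have ha_norm : ‖a‖ ≤ ‖e‖ := by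
    apply sqrt_mono_sq (norm_nonneg _) (norm_nonneg _)
    nlinarith [mul_nonneg hα.le (sq_nonneg r)]
  have hrc : |r| ≤ ‖xi‖ * ‖e‖ := abs_real_inner_le_norm xi e
  have hxnn : (0:ℝ) ≤ ‖xi‖ := norm_nonneg _
  have hδ2 : ‖δ‖ ≤ β * L * ‖e‖ := by
    have h5 : |r| * ‖xi‖ ≤ L * ‖e‖ := by
      calc |r| * ‖xi‖ ≤ (‖xi‖*‖e‖)*‖xi‖ := mul_le_mul_of_nonneg_right hrc hxnn
      _ = ‖xi‖^2*‖e‖ := by ring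
      _ ≤ L*‖e‖ := mul_le_mul_of_nonneg_right hxi (norm_nonneg e)
    calc ‖δ‖ ≤ β * |r| * ‖xi‖ := hδnorm
    _ = β * (|r| * ‖xi‖) := by ring
    _ ≤ β * (L * ‖e‖) := mul_le_mul_of_nonneg_left h5 hβ
    _ = β * L * ‖e‖ := by ring
  have hfin : ‖a - α • δ‖^2 = ‖a‖^2 - 2*⟪a, α•δ⟫ + ‖α•δ‖^2 := norm_sub_sq_real a (α•δ)
  have hip : |⟪a, α•δ⟫| ≤ ‖a‖ * ‖α•δ‖ := abs_real_inner_le_norm a (α•δ)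
  have hbn : ‖α•δ‖ = α * ‖δ‖ := by
    rw [norm_smul, Real.norm_eq_abs, abs_of_pos hα]
  have hb1 : ‖α•δ‖ ≤ α*(β*L*‖e‖) := by
    rw [hbn]; exact mul_le_mul_of_nonneg_left hδ2 hα.le
  have hb0 : (0:ℝ) ≤ ‖α•δ‖ := norm_nonneg _
  have hprod : ‖a‖*‖α•δ‖ ≤ ‖e‖*(α*(β*L*‖e‖)) := mul_le_mul ha_norm hb1 hb0 (norm_nonneg e)
  have hsq2 : ‖α•δ‖^2 ≤ (α*(β*L*‖e‖))^2 := by nlinarith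
  have hneg : -⟪a, α•δ⟫ ≤ ‖a‖ * ‖α•δ‖ := by
    have := neg_abs_le (⟪a, α•δ⟫ : ℝ); linarith
  calc ‖a - α • δ‖^2 = ‖a‖^2 - 2*⟪a, α•δ⟫ + ‖α•δ‖^2 := hfin
  _ ≤ (‖e‖^2 - α*r^2) + 2*(‖a‖*‖α•δ‖) + ‖α•δ‖^2 := by linarith
  _ ≤ (‖e‖^2 - α*r^2) + 2*(‖e‖*(α*(β*L*‖e‖))) + (α*(β*L*‖e‖))^2 := by linarith
  _ = (1 + 2*α*β*L + α^2*β^2*L^2) * ‖e‖^2 - α*r^2 := by ring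


/-- Rigorous form of Theorem 2: SGD on interpolating least squares with nearest
rounding only in the forward and backward compute (exact weight updates) converges
linearly in expectation over the random index sequence. -/
theorem rounded_forward_backward_sgd_convergence
    {d n : ℕ} (T : ℕ) (ε α L μ : ℝ) (hε : 0 < ε) (hL : 0 < L)
    (hα : 0 < α) (hαL : α ≤ 1 / L) (hμ : 0 ≤ μ)
    (x : Fin n → EuclideanSpace ℝ (Fin d))
    (hx : ∀ i, ‖x i‖ ^ 2 ≤ L)
    (wstar : EuclideanSpace ℝ (Fin d))
    (y : Fin n → ℝ) (hy : ∀ i, y i = ⟪x i, wstar⟫)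
    (heig : ∀ v : EuclideanSpace ℝ (Fin d),
      μ * ‖v‖ ^ 2 ≤ (1 / (n : ℝ)) * ∑ i : Fin n, ⟪x i, v⟫ ^ 2)
    (Q : ℝ → ℝ) (hQ : ∀ u : ℝ, |Q u - u| ≤ ε * |u|)
    (w0 : EuclideanSpace ℝ (Fin d))
    (w : (Fin T → Fin n) → ℕ → EuclideanSpace ℝ (Fin d))
    (hw0 : ∀ σ, w σ 0 = w0)
    (hiter : ∀ (σ : Fin T → Fin n) (t : Fin T),
      w σ ((t : ℕ) + 1) =
        w σ (t : ℕ) -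
          α • (show EuclideanSpace ℝ (Fin d) from
            WithLp.toLp 2 (fun j => Q ((Q (⟪x (σ t), w σ (t : ℕ)⟫ - y (σ t)) • x (σ t)) j)))) :
    (1 / (n : ℝ) ^ T) * ∑ σ : Fin T → Fin n, ‖w σ T - wstar‖ ^ 2 ≤
      (1 - α * μ + 2 * α * ε * (2 + ε) * L + α ^ 2 * ε ^ 2 * (2 + ε) ^ 2 * L ^ 2) ^ T *
        ‖w0 - wstar‖ ^ 2 := by
  set ρ : ℝ := 1 - α * μ + 2 * α * ε * (2 + ε) * L + α ^ 2 * ε ^ 2 * (2 + ε) ^ 2 * L ^ 2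
    with hρdef
  set C : ℝ := 1 + 2*α*(ε*(2+ε))*L + α^2*(ε*(2+ε))^2*L^2 with hCdef
  have hCρ : ρ = C - α * μ := by rw [hρdef, hCdef]; ring
  by_cases hd : d = 0
  · subst hd
    have h1 : ∀ v : EuclideanSpace ℝ (Fin 0), ‖v‖ = 0 := by
      intro v
      simp [EuclideanSpace.norm_eq]
    simp [h1]
  · have hd' : 0 < d := Nat.pos_of_ne_zero hd
    have hαL1 : α * L ≤ 1 := (le_div_iff₀ hL).mp hαL
    -- μ ≤ L
    have hμL : μ ≤ L := by
      set v : EuclideanSpace ℝ (Fin d) := EuclideanSpace.single (⟨0, hd'⟩ : Fin d) (1:ℝ)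
        with hvdef
      have hvnorm : ‖v‖ = 1 := by rw [hvdef, EuclideanSpace.norm_single]; norm_num
      have h := heig v
      rw [hvnorm] at h
      simp only [one_pow, mul_one] at h
      rcases Nat.eq_zero_or_pos n with hn | hn
      · subst hn
        simp at h
        linarith
      · have hterm : ∀ i : Fin n, ⟪x i, v⟫^2 ≤ L := by
          intro i
          have h2 := abs_real_inner_le_norm (x i) v
          rw [hvnorm, mul_one] at h2
          nlinarith [hx i, sq_abs (⟪x i, v⟫ : ℝ), norm_nonneg (x i), abs_nonneg (⟪x i, v⟫ : ℝ)]
        have hsum : ∑ i : Fin n, (⟪x i, v⟫:ℝ)^2 ≤ (n:ℝ) * L := by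
          calc ∑ i : Fin n, (⟪x i, v⟫:ℝ)^2 ≤ ∑ _i : Fin n, L := Finset.sum_le_sum fun i _ => hterm i
          _ = (n:ℝ) * L := by simp [Finset.sum_const, mul_comm]
        have hn' : (0:ℝ) < n := by exact_mod_cast hn
        have h3 : (1/(n:ℝ)) * ∑ i : Fin n, (⟪x i, v⟫:ℝ)^2 ≤ (1/(n:ℝ)) * ((n:ℝ)*L) :=
          mul_le_mul_of_nonneg_left hsum (by positivity)
        have h4 : (1/(n:ℝ)) * ((n:ℝ)*L) = L := by field_simp
        linarith
    have hβ : (0:ℝ) ≤ ε*(2+ε) := by nlinarith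
    have hρ0 : (0:ℝ) ≤ ρ := by
      have t1 : (0:ℝ) ≤ 2 * α * ε * (2 + ε) * L := by positivity
      have t2 : (0:ℝ) ≤ α ^ 2 * ε ^ 2 * (2 + ε) ^ 2 * L ^ 2 := by positivity
      have t3 : α * μ ≤ α * L := mul_le_mul_of_nonneg_left hμL hα.le
      rw [hρdef]; linarith
    -- dependence lemma
    have hdep : ∀ (σ₁ σ₂ : Fin T → Fin n) (t : ℕ), t ≤ T →
        (∀ s : Fin T, (s:ℕ) < t → σ₁ s = σ₂ s) → w σ₁ t = w σ₂ t := by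
      intro σ₁ σ₂ t
      induction t with
      | zero => intro _ _; rw [hw0, hw0]
      | succ t ih =>
        intro ht hs
        have htT : t < T := ht
        have h1 : w σ₁ t = w σ₂ t :=
          ih (le_of_lt htT) (fun s hst => hs s (Nat.lt_succ_of_lt hst))
        have h2 : σ₁ ⟨t, htT⟩ = σ₂ ⟨t, htT⟩ := hs ⟨t, htT⟩ (Nat.lt_succ_self t)
        have e1 := hiter σ₁ ⟨t, htT⟩
        have e2 := hiter σ₂ ⟨t, htT⟩
        simp only [Fin.val_mk] at e1 e2
        rw [e1, e2, h1, h2]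
    by_cases hn : n = 0
    · subst hn
      rcases Nat.eq_zero_or_pos T with hT | hT
      · subst hT
        simp [hw0]
      · have : IsEmpty (Fin T → Fin 0) := ⟨fun σ => (σ ⟨0, hT⟩).elim0⟩
        rw [Finset.univ_eq_empty, Finset.sum_empty, mul_zero]
        exact mul_nonneg (pow_nonneg hρ0 T) (sq_nonneg _)
    · have hn' : 0 < n := Nat.pos_of_ne_zero hn
      have hnR : (0:ℝ) < n := by exact_mod_cast hn'
      -- reindexing identity
      have hsum1 : ∀ (f : (Fin T → Fin n) → ℝ) (t : Fin T),
          ∑ σ : Fin T → Fin n, f σ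
            = ∑ σ' : {j : Fin T // j ≠ t} → Fin n, ∑ i : Fin n,
                f ((Equiv.funSplitAt t (Fin n)).symm (i, σ')) := by
        intro f t
        rw [← Equiv.sum_comp (Equiv.funSplitAt t (Fin n)).symm f, Fintype.sum_prod_type]
        exact Finset.sum_comm
      have hstep : ∀ t : Fin T,
          ∑ σ : Fin T → Fin n, ‖w σ ((t:ℕ)+1) - wstar‖^2
            ≤ ρ * ∑ σ : Fin T → Fin n, ‖w σ (t:ℕ) - wstar‖^2 := by
        intro t
        have hkey : ∀ σ' : {j : Fin T // j ≠ t} → Fin n,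
            ∑ i : Fin n, ‖w ((Equiv.funSplitAt t (Fin n)).symm (i, σ')) ((t:ℕ)+1) - wstar‖^2
              ≤ ρ * ∑ i : Fin n,
                  ‖w ((Equiv.funSplitAt t (Fin n)).symm (i, σ')) (t:ℕ) - wstar‖^2 := by
          intro σ'
          set τ : Fin n → (Fin T → Fin n) :=
            fun i => (Equiv.funSplitAt t (Fin n)).symm (i, σ') with hτ
          set i0 : Fin n := ⟨0, hn'⟩ with hi0
          have hτt : ∀ i, τ i t = i := by
            intro i; simp [hτ, Equiv.funSplitAt_symm_apply]
          have hτw : ∀ i, w (τ i) (t:ℕ) = w (τ i0) (t:ℕ) := by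
            intro i
            apply hdep _ _ _ (le_of_lt t.isLt)
            intro s hst
            have hne : s ≠ t := fun h => by rw [h] at hst; exact lt_irrefl _ hst
            simp [hτ, Equiv.funSplitAt_symm_apply, hne]
          have key : ∀ i : Fin n, ‖w (τ i) ((t:ℕ)+1) - wstar‖^2
              ≤ C * ‖w (τ i0) (t:ℕ) - wstar‖^2 - α * ⟪x i, w (τ i0) (t:ℕ) - wstar⟫^2 := by
            intro i
            have hit := hiter (τ i) t
            rw [hτt i] at hit
            have hsub : w (τ i) ((t:ℕ)+1) - wstar
                = (w (τ i) (t:ℕ) - wstar) - α • (show EuclideanSpace ℝ (Fin d) from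
                    WithLp.toLp 2 (fun j => Q ((Q (⟪x i, w (τ i) (t:ℕ)⟫ - y i) • x i) j))) := by
              rw [hit]; exact sub_right_comm _ _ _
            have hc : (⟪x i, w (τ i) (t:ℕ)⟫ : ℝ) - y i = ⟪x i, w (τ i) (t:ℕ) - wstar⟫ := by
              rw [hy i]; exact (inner_sub_right _ _ _).symm
            have h := stepA ε α L hε hα hαL1 (x i) (hx i) Q hQ
              (w (τ i) (t:ℕ) - wstar) (⟪x i, w (τ i) (t:ℕ)⟫ - y i) hc
            rw [← hsub] at h
            rw [hτw i] at h
            rw [hCdef]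
            exact h
          calc ∑ i : Fin n, ‖w (τ i) ((t:ℕ)+1) - wstar‖^2
              ≤ ∑ i : Fin n, (C * ‖w (τ i0) (t:ℕ) - wstar‖^2
                  - α * ⟪x i, w (τ i0) (t:ℕ) - wstar⟫^2) :=
                Finset.sum_le_sum fun i _ => key i
          _ = (n:ℝ) * (C * ‖w (τ i0) (t:ℕ) - wstar‖^2)
                - α * ∑ i : Fin n, ⟪x i, w (τ i0) (t:ℕ) - wstar⟫^2 := by
              rw [Finset.sum_sub_distrib, Finset.sum_const, Finset.mul_sum]
              simp [mul_comm]
          _ ≤ (n:ℝ) * (C * ‖w (τ i0) (t:ℕ) - wstar‖^2)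
                - α * ((n:ℝ) * (μ * ‖w (τ i0) (t:ℕ) - wstar‖^2)) := by
              have h6 : (n:ℝ) * (μ * ‖w (τ i0) (t:ℕ) - wstar‖^2)
                  ≤ ∑ i : Fin n, ⟪x i, w (τ i0) (t:ℕ) - wstar⟫^2 := by
                have h7 := heig (w (τ i0) (t:ℕ) - wstar)
                have h8 := mul_le_mul_of_nonneg_left h7 hnR.le
                calc (n:ℝ) * (μ * ‖w (τ i0) (t:ℕ) - wstar‖^2)
                    ≤ (n:ℝ) * ((1/(n:ℝ)) * ∑ i : Fin n, ⟪x i, w (τ i0) (t:ℕ) - wstar⟫^2) := h8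
                _ = ∑ i : Fin n, ⟪x i, w (τ i0) (t:ℕ) - wstar⟫^2 := by
                    field_simp
              nlinarith [mul_le_mul_of_nonneg_left h6 hα.le]
          _ = ρ * ∑ i : Fin n, ‖w (τ i) (t:ℕ) - wstar‖^2 := by
              have h9 : ∑ i : Fin n, ‖w (τ i) (t:ℕ) - wstar‖^2
                  = (n:ℝ) * ‖w (τ i0) (t:ℕ) - wstar‖^2 := by
                calc ∑ i : Fin n, ‖w (τ i) (t:ℕ) - wstar‖^2
                    = ∑ _i : Fin n, ‖w (τ i0) (t:ℕ) - wstar‖^2 :=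
                      Finset.sum_congr rfl fun i _ => by rw [hτw i]
                _ = (n:ℝ) * ‖w (τ i0) (t:ℕ) - wstar‖^2 := by
                    simp [Finset.sum_const, mul_comm]
              rw [h9, hCρ]; ring
        calc ∑ σ : Fin T → Fin n, ‖w σ ((t:ℕ)+1) - wstar‖^2
            = ∑ σ' : {j : Fin T // j ≠ t} → Fin n, ∑ i : Fin n,
                ‖w ((Equiv.funSplitAt t (Fin n)).symm (i, σ')) ((t:ℕ)+1) - wstar‖^2 :=
              hsum1 _ t
        _ ≤ ∑ σ' : {j : Fin T // j ≠ t} → Fin n, ρ * ∑ i : Fin n,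
                ‖w ((Equiv.funSplitAt t (Fin n)).symm (i, σ')) (t:ℕ) - wstar‖^2 :=
              Finset.sum_le_sum fun σ' _ => hkey σ'
        _ = ρ * ∑ σ' : {j : Fin T // j ≠ t} → Fin n, ∑ i : Fin n,
                ‖w ((Equiv.funSplitAt t (Fin n)).symm (i, σ')) (t:ℕ) - wstar‖^2 :=
              (Finset.mul_sum _ _ _).symm
        _ = ρ * ∑ σ : Fin T → Fin n, ‖w σ (t:ℕ) - wstar‖^2 := by
              rw [← hsum1 (fun σ => ‖w σ (t:ℕ) - wstar‖^2) t]
      have hrec : ∀ t : ℕ, t ≤ T →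
          ∑ σ : Fin T → Fin n, ‖w σ t - wstar‖^2
            ≤ ρ^t * ∑ σ : Fin T → Fin n, ‖w σ 0 - wstar‖^2 := by
        intro t
        induction t with
        | zero => intro _; simp
        | succ t ih =>
          intro ht
          have htT : t < T := ht
          have h1 := hstep ⟨t, htT⟩
          simp only [Fin.val_mk] at h1
          calc ∑ σ : Fin T → Fin n, ‖w σ (t+1) - wstar‖^2
              ≤ ρ * ∑ σ : Fin T → Fin n, ‖w σ t - wstar‖^2 := h1
          _ ≤ ρ * (ρ^t * ∑ σ : Fin T → Fin n, ‖w σ 0 - wstar‖^2) :=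
              mul_le_mul_of_nonneg_left (ih (le_of_lt htT)) hρ0
          _ = ρ^(t+1) * ∑ σ : Fin T → Fin n, ‖w σ 0 - wstar‖^2 := by ring
      have hS0 : ∑ σ : Fin T → Fin n, ‖w σ 0 - wstar‖^2 = (n:ℝ)^T * ‖w0 - wstar‖^2 := by
        simp only [hw0]
        rw [Finset.sum_const, Finset.card_univ, Fintype.card_fun, Fintype.card_fin,
          Fintype.card_fin, nsmul_eq_mul, Nat.cast_pow]
      have hfinal := hrec T le_rfl
      rw [hS0] at hfinal
      calc (1/(n:ℝ)^T) * ∑ σ : Fin T → Fin n, ‖w σ T - wstar‖^2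
          ≤ (1/(n:ℝ)^T) * (ρ^T * ((n:ℝ)^T * ‖w0 - wstar‖^2)) :=
            mul_le_mul_of_nonneg_left hfinal (by positivity)
      _ = ρ^T * ‖w0 - wstar‖^2 := by
          field_simp
end

section
/- Under the hypotheses of the rigorous form of Theorem 2 — interpolating least squares with ‖x_i‖² ≤ L, y_i = x_iᵀw*, eigenvalue bound (1/n)Σ_i⟨x_i, v⟩² ≥ μ‖v‖², step size 0 < α ≤ 1/L, rounding Q with |Q(u) − u| ≤ ε|u|, and iterates w_{t+1}^σ = w_t^σ − α·Q(Q(x_{σ(t)}ᵀ w_t^σ − y_{σ(t)})·x_{σ(t)}) — the expected squared distance decays exponentially: (1/n^T)·Σ_{σ ∈ {1,…,n}^T} ‖w_T^σ − w*‖² ≤ exp( −T·(αμ − 2αε(2+ε)L − α²ε²(2+ε)²L²) ) · ‖w_0 − w*‖². (This is the exponential-decay form of Theorem 2; the paper states it as exp(−αμT(1 − 4εL/μ)) after disregarding ε² terms.) -/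
open scoped RealInnerProductSpace BigOperators

set_option maxHeartbeats 1000000 in
/-- One-step bound for rounded SGD on least squares, for a single data point. -/
theorem rsgd_step_bound {d : ℕ} (ε α L : ℝ) (hε : 0 < ε)
    (hα : 0 < α) (hαL : α * L ≤ 1)
    (x : EuclideanSpace ℝ (Fin d)) (hx : ‖x‖ ^ 2 ≤ L)
    (Q : ℝ → ℝ) (hQ : ∀ u : ℝ, |Q u - u| ≤ ε * |u|)
    (u : EuclideanSpace ℝ (Fin d)) :
    ‖u - α • (show EuclideanSpace ℝ (Fin d) from WithLp.toLp 2 (fun j => Q ((Q ⟪x, u⟫ • x) j)))‖ ^ 2 ≤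
      ‖u‖^2 - α * ⟪x, u⟫^2
        + (2 * α * ε * (2 + ε) * L + α ^ 2 * ε ^ 2 * (2 + ε) ^ 2 * L ^ 2) * ‖u‖ ^ 2 := by
  set r : ℝ := ⟪x, u⟫ with hr
  set g : EuclideanSpace ℝ (Fin d) := WithLp.toLp 2 (fun j => Q ((Q r • x) j)) with hg
  set δ : EuclideanSpace ℝ (Fin d) := g - r • x with hδ
  have hQr : |Q r - r| ≤ ε * |r| := hQ r
  have hQr' : |Q r| ≤ (1 + ε) * |r| := by
    have := abs_sub_abs_le_abs_sub (Q r) r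
    nlinarith [abs_nonneg r]
  have hδj : ∀ j, |δ j| ≤ ε * (2 + ε) * (|r| * |x j|) := by
    intro j
    have h1 : |Q ((Q r • x) j) - (Q r • x) j| ≤ ε * |(Q r • x) j| := hQ _
    have hsm : (Q r • x) j = Q r * x j := rfl
    have hsm2 : (r • x) j = r * x j := rfl
    have hδjj : δ j = g j - r * x j := by simp [hδ, hsm2]
    rw [hδjj]
    have hgj : g j = Q (Q r * x j) := rfl
    rw [hgj]; rw [hsm] at h1
    have h2 : |Q r * x j - r * x j| = |Q r - r| * |x j| := by
      rw [← sub_mul, abs_mul]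
    have h3 : |Q r * x j| = |Q r| * |x j| := abs_mul _ _
    have h4 := abs_sub_le (Q (Q r * x j)) (Q r * x j) (r * x j)
    rw [h3] at h1
    rw [h2] at h4
    nlinarith [abs_nonneg (x j), abs_nonneg r,
      mul_le_mul_of_nonneg_right hQr (abs_nonneg (x j)),
      mul_le_mul_of_nonneg_right hQr' (abs_nonneg (x j))]
  have hδnorm : ‖δ‖ ≤ ε * (2 + ε) * (|r| * ‖x‖) := by
    have h1 : ‖δ‖^2 ≤ (ε * (2 + ε) * |r|)^2 * ‖x‖^2 := by
      rw [EuclideanSpace.norm_eq δ, EuclideanSpace.norm_eq x,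
        Real.sq_sqrt (by positivity), Real.sq_sqrt (by positivity),
        Finset.mul_sum]
      apply Finset.sum_le_sum
      intro j _
      have := hδj j
      have h2 : ‖δ j‖ = |δ j| := rfl
      have h3 : ‖x j‖ = |x j| := rfl
      rw [h2, h3]
      nlinarith [abs_nonneg (δ j), abs_nonneg (x j), abs_nonneg r]
    have : (ε * (2 + ε) * |r|)^2 * ‖x‖^2 = (ε * (2 + ε) * (|r| * ‖x‖))^2 := by ring
    rw [this] at h1
    nlinarith [norm_nonneg δ, abs_nonneg r, norm_nonneg x,
      mul_nonneg (mul_nonneg hε.le (by linarith : (0:ℝ) ≤ 2 + ε))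
        (mul_nonneg (abs_nonneg r) (norm_nonneg x))]
  have hru : |r| ≤ ‖x‖ * ‖u‖ := by rw [hr]; exact abs_real_inner_le_norm x u
  clear_value r g δ
  set p : EuclideanSpace ℝ (Fin d) := u - (α * r) • x with hp
  have hgoalvec : u - α • g = p - α • δ := by
    rw [hp, hδ]; module
  clear_value p
  have hr' : ⟪u, x⟫ = r := by rw [real_inner_comm]; exact hr.symm
  have hnp : ‖p‖^2 = ‖u‖^2 - 2*(α*r)*r + (α*r)^2*‖x‖^2 := by
    rw [hp, norm_sub_sq_real, real_inner_smul_right, hr',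
      norm_smul, Real.norm_eq_abs, mul_pow, sq_abs]; ring
  have hpu : ‖p‖^2 ≤ ‖u‖^2 - α * r^2 := by
    nlinarith [sq_nonneg r, mul_le_mul_of_nonneg_left hx (mul_nonneg (sq_nonneg α) (sq_nonneg r)),
      mul_nonneg hα.le (sq_nonneg r)]
  have hpnorm : ‖p‖ ≤ ‖u‖ := by
    have h5 : ‖p‖^2 ≤ ‖u‖^2 := by nlinarith [mul_nonneg hα.le (sq_nonneg r)]
    exact (pow_le_pow_iff_left₀ (norm_nonneg p) (norm_nonneg u) two_ne_zero).mp h5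
  have h6 : |r| * ‖x‖ ≤ ‖x‖^2 * ‖u‖ := by nlinarith [norm_nonneg x]
  have h7 : (0:ℝ) ≤ 2 + ε := by linarith
  have hA : ‖δ‖ * ‖p‖ ≤ ε * (2+ε) * L * ‖u‖^2 := by
    calc ‖δ‖ * ‖p‖ ≤ (ε*(2+ε)*(|r| * ‖x‖)) * ‖u‖ :=
          mul_le_mul hδnorm hpnorm (norm_nonneg p) (by positivity)
      _ ≤ (ε*(2+ε)*(‖x‖^2*‖u‖)) * ‖u‖ := by gcongr
      _ ≤ (ε*(2+ε)*(L*‖u‖)) * ‖u‖ := by gcongr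
      _ = ε*(2+ε)*L*‖u‖^2 := by ring
  have hB : ‖δ‖^2 ≤ ε^2*(2+ε)^2*(L^2*‖u‖^2) := by
    calc ‖δ‖^2 ≤ (ε*(2+ε)*(|r| * ‖x‖))^2 := pow_le_pow_left₀ (norm_nonneg δ) hδnorm 2
      _ = ε^2*(2+ε)^2*(|r| * ‖x‖)^2 := by ring
      _ ≤ ε^2*(2+ε)^2*(‖x‖^2*‖u‖)^2 := by gcongr
      _ = ε^2*(2+ε)^2*((‖x‖^2)^2*‖u‖^2) := by ring
      _ ≤ ε^2*(2+ε)^2*(L^2*‖u‖^2) := by gcongr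
  have hip : ⟪p, α•δ⟫ = α * ⟪p, δ⟫ := real_inner_smul_right p δ α
  have habs := abs_real_inner_le_norm p δ
  have hsmn : ‖α•δ‖^2 = α^2*‖δ‖^2 := by
    rw [norm_smul, Real.norm_eq_abs, mul_pow, sq_abs]
  have hI : -(‖p‖*‖δ‖) ≤ ⟪p,δ⟫ := (abs_le.mp habs).1
  calc ‖u - α • g‖^2 = ‖p - α•δ‖^2 := by rw [hgoalvec]
    _ = ‖p‖^2 - 2*⟪p, α•δ⟫ + ‖α•δ‖^2 := norm_sub_sq_real p (α•δ)
    _ ≤ ‖u‖^2 - α * r^2 + (2 * α * ε * (2 + ε) * L + α ^ 2 * ε ^ 2 * (2 + ε) ^ 2 * L ^ 2) * ‖u‖ ^ 2 := by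
        rw [hip, hsmn]
        have h8 : -(2*α*⟪p,δ⟫) ≤ 2*α*(‖δ‖*‖p‖) := by nlinarith
        have h9 : 2*α*(‖δ‖*‖p‖) ≤ 2*α*(ε*(2+ε)*L*‖u‖^2) :=
          mul_le_mul_of_nonneg_left hA (by positivity)
        have h10 : α^2*‖δ‖^2 ≤ α^2*(ε^2*(2+ε)^2*(L^2*‖u‖^2)) :=
          mul_le_mul_of_nonneg_left hB (sq_nonneg α)
        nlinarith

/-- Averaged one-step bound. -/
theorem rsgd_avg_bound {d n : ℕ} (ε α L μ : ℝ) (hε : 0 < ε) (hL : 0 < L)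
    (hα : 0 < α) (hαL : α * L ≤ 1) (hn : 0 < n)
    (x : Fin n → EuclideanSpace ℝ (Fin d)) (hx : ∀ i, ‖x i‖ ^ 2 ≤ L)
    (heig : ∀ v : EuclideanSpace ℝ (Fin d),
      μ * ‖v‖ ^ 2 ≤ (1 / (n : ℝ)) * ∑ i : Fin n, ⟪x i, v⟫ ^ 2)
    (Q : ℝ → ℝ) (hQ : ∀ u : ℝ, |Q u - u| ≤ ε * |u|)
    (u : EuclideanSpace ℝ (Fin d)) :
    ∑ i : Fin n, ‖u - α • (show EuclideanSpace ℝ (Fin d) from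
        WithLp.toLp 2 (fun j => Q ((Q ⟪x i, u⟫ • x i) j)))‖ ^ 2 ≤
      (n : ℝ) * (1 - (α * μ - 2 * α * ε * (2 + ε) * L - α ^ 2 * ε ^ 2 * (2 + ε) ^ 2 * L ^ 2))
        * ‖u‖ ^ 2 := by
  have hnR : (0:ℝ) < (n:ℝ) := by exact_mod_cast hn
  have key : ∀ i : Fin n,
      ‖u - α • (show EuclideanSpace ℝ (Fin d) from WithLp.toLp 2 (fun j => Q ((Q ⟪x i, u⟫ • x i) j)))‖ ^ 2 ≤
        ‖u‖^2 - α * ⟪x i, u⟫^2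
          + (2 * α * ε * (2 + ε) * L + α ^ 2 * ε ^ 2 * (2 + ε) ^ 2 * L ^ 2) * ‖u‖ ^ 2 :=
    fun i => rsgd_step_bound ε α L hε hα hαL (x i) (hx i) Q hQ u
  have h2 : (n:ℝ) * (μ * ‖u‖^2) ≤ ∑ i : Fin n, ⟪x i, u⟫^2 := by
    have h := heig u
    have := mul_le_mul_of_nonneg_left h hnR.le
    calc (n:ℝ) * (μ * ‖u‖^2) ≤ (n:ℝ) * ((1/(n:ℝ)) * ∑ i : Fin n, ⟪x i, u⟫^2) := this
      _ = ∑ i : Fin n, ⟪x i, u⟫^2 := by field_simp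
  calc ∑ i : Fin n, ‖u - α • (show EuclideanSpace ℝ (Fin d) from
          WithLp.toLp 2 (fun j => Q ((Q ⟪x i, u⟫ • x i) j)))‖ ^ 2
      ≤ ∑ i : Fin n, (‖u‖^2 - α * ⟪x i, u⟫^2
          + (2 * α * ε * (2 + ε) * L + α ^ 2 * ε ^ 2 * (2 + ε) ^ 2 * L ^ 2) * ‖u‖ ^ 2) :=
        Finset.sum_le_sum (fun i _ => key i)
    _ = (n:ℝ) * (‖u‖^2 + (2 * α * ε * (2 + ε) * L + α ^ 2 * ε ^ 2 * (2 + ε) ^ 2 * L ^ 2) * ‖u‖ ^ 2)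
          - α * ∑ i : Fin n, ⟪x i, u⟫^2 := by
        rw [Finset.sum_add_distrib, Finset.sum_sub_distrib, Finset.sum_const, Finset.sum_const,
          ← Finset.mul_sum, Finset.card_univ, Fintype.card_fin, nsmul_eq_mul]
        ring
    _ ≤ (n:ℝ) * (‖u‖^2 + (2 * α * ε * (2 + ε) * L + α ^ 2 * ε ^ 2 * (2 + ε) ^ 2 * L ^ 2) * ‖u‖ ^ 2)
          - α * ((n:ℝ) * (μ * ‖u‖^2)) := by
        have := mul_le_mul_of_nonneg_left h2 hα.le
        linarith
    _ = (n : ℝ) * (1 - (α * μ - 2 * α * ε * (2 + ε) * L - α ^ 2 * ε ^ 2 * (2 + ε) ^ 2 * L ^ 2))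
          * ‖u‖ ^ 2 := by ring

/-- The iterate at step `t` depends only on the first `t` index choices. -/
theorem rsgd_w_agree {d n T : ℕ} {α : ℝ} {x : Fin n → EuclideanSpace ℝ (Fin d)} {y : Fin n → ℝ}
    {Q : ℝ → ℝ} {w : (Fin T → Fin n) → ℕ → EuclideanSpace ℝ (Fin d)}
    {w0 : EuclideanSpace ℝ (Fin d)}
    (hw0 : ∀ σ, w σ 0 = w0)
    (hiter : ∀ (σ : Fin T → Fin n) (t : Fin T),
      w σ ((t : ℕ) + 1) =
        w σ (t : ℕ) -
          α • (show EuclideanSpace ℝ (Fin d) from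
            WithLp.toLp 2 (fun j => Q ((Q (⟪x (σ t), w σ (t : ℕ)⟫ - y (σ t)) • x (σ t)) j)))) :
    ∀ (t : ℕ), t ≤ T → ∀ σ σ' : Fin T → Fin n,
      (∀ i : Fin T, (i : ℕ) < t → σ i = σ' i) → w σ t = w σ' t := by
  intro t
  induction t with
  | zero => intro _ σ σ' _; rw [hw0, hw0]
  | succ t ih =>
    intro ht σ σ' hag
    have htT : t < T := by omega
    set ti : Fin T := ⟨t, htT⟩ with hti
    have hcoe : ((ti : Fin T) : ℕ) = t := rfl
    have h1 := hiter σ ti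
    have h2 := hiter σ' ti
    rw [hcoe] at h1 h2
    have hw : w σ t = w σ' t := ih (by omega) σ σ' (fun i hi => hag i (by omega))
    have hσ : σ ti = σ' ti := hag ti (by omega)
    rw [h1, h2, hw, hσ]

/-- Exponential-decay form of Theorem 2: SGD on interpolating least squares with
nearest rounding only in forward/backward compute has expected squared distance to the
optimum decaying exponentially in the number of steps. -/
theorem rounded_forward_backward_sgd_exponential_decay
    {d n : ℕ} (T : ℕ) (ε α L μ : ℝ) (hε : 0 < ε) (hL : 0 < L)
    (hα : 0 < α) (hαL : α ≤ 1 / L) (hμ : 0 ≤ μ)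
    (x : Fin n → EuclideanSpace ℝ (Fin d))
    (hx : ∀ i, ‖x i‖ ^ 2 ≤ L)
    (wstar : EuclideanSpace ℝ (Fin d))
    (y : Fin n → ℝ) (hy : ∀ i, y i = ⟪x i, wstar⟫)
    (heig : ∀ v : EuclideanSpace ℝ (Fin d),
      μ * ‖v‖ ^ 2 ≤ (1 / (n : ℝ)) * ∑ i : Fin n, ⟪x i, v⟫ ^ 2)
    (Q : ℝ → ℝ) (hQ : ∀ u : ℝ, |Q u - u| ≤ ε * |u|)
    (w0 : EuclideanSpace ℝ (Fin d))
    (w : (Fin T → Fin n) → ℕ → EuclideanSpace ℝ (Fin d))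
    (hw0 : ∀ σ, w σ 0 = w0)
    (hiter : ∀ (σ : Fin T → Fin n) (t : Fin T),
      w σ ((t : ℕ) + 1) =
        w σ (t : ℕ) -
          α • (show EuclideanSpace ℝ (Fin d) from
            WithLp.toLp 2 (fun j => Q ((Q (⟪x (σ t), w σ (t : ℕ)⟫ - y (σ t)) • x (σ t)) j)))) :
    (1 / (n : ℝ) ^ T) * ∑ σ : Fin T → Fin n, ‖w σ T - wstar‖ ^ 2 ≤
      Real.exp (-(T : ℝ) *
          (α * μ - 2 * α * ε * (2 + ε) * L - α ^ 2 * ε ^ 2 * (2 + ε) ^ 2 * L ^ 2)) *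
        ‖w0 - wstar‖ ^ 2 := by
  set c : ℝ := α * μ - 2 * α * ε * (2 + ε) * L - α ^ 2 * ε ^ 2 * (2 + ε) ^ 2 * L ^ 2 with hc
  -- trivial case T = 0
  rcases Nat.eq_zero_or_pos T with hT | hT
  · subst hT
    have h1 : ∀ σ : Fin 0 → Fin n, ‖w σ 0 - wstar‖^2 = ‖w0 - wstar‖^2 := by
      intro σ; rw [hw0]
    simp only [h1, Finset.sum_const, Finset.card_univ, nsmul_eq_mul]
    simp [Fintype.card_fun]
  -- trivial case n = 0
  rcases Nat.eq_zero_or_pos n with hn | hn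
  · subst hn
    haveI : IsEmpty (Fin T → Fin 0) := ⟨fun f => (f ⟨0, hT⟩).elim0⟩
    rw [Finset.univ_eq_empty, Finset.sum_empty, mul_zero]
    positivity
  -- trivial case d = 0
  rcases Nat.eq_zero_or_pos d with hd | hd
  · subst hd
    have hz : ∀ v : EuclideanSpace ℝ (Fin 0), ‖v‖ = 0 := by
      intro v; rw [EuclideanSpace.norm_eq]; simp
    have h1 : ∀ σ : Fin T → Fin n, ‖w σ T - wstar‖^2 = 0 := by
      intro σ; rw [hz]; ring
    rw [Finset.sum_congr rfl (fun σ _ => h1 σ), Finset.sum_const, smul_zero, mul_zero]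
    positivity
  -- main case
  have hαL' : α * L ≤ 1 := by
    rw [le_div_iff₀ hL] at hαL; linarith
  have hnR : (0:ℝ) < (n:ℝ) := by exact_mod_cast hn
  -- μ ≤ L, hence 0 ≤ 1 - c
  have hμL : μ ≤ L := by
    set v : EuclideanSpace ℝ (Fin d) := EuclideanSpace.single ⟨0, hd⟩ 1 with hv
    have hnv : ‖v‖ = 1 := by rw [hv, EuclideanSpace.norm_single, norm_one]
    have h1 := heig v
    rw [hnv] at h1
    have h2 : ∑ i : Fin n, ⟪x i, v⟫^2 ≤ ∑ i : Fin n, L := by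
      apply Finset.sum_le_sum
      intro i _
      have h3 := abs_real_inner_le_norm (x i) v
      rw [hnv, mul_one] at h3
      nlinarith [abs_nonneg ⟪x i, v⟫, sq_abs ⟪x i, v⟫, norm_nonneg (x i), hx i]
    rw [Finset.sum_const, Finset.card_univ, Fintype.card_fin, nsmul_eq_mul] at h2
    have h4 : (1/(n:ℝ)) * ∑ i : Fin n, ⟪x i, v⟫^2 ≤ L := by
      rw [one_div, inv_mul_le_iff₀ hnR]
      nlinarith [h2]

    simpa using h1.trans h4
  have h1c : 0 ≤ 1 - c := by
    have hcle : c ≤ α * μ := by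
      rw [hc]
      nlinarith [mul_nonneg (mul_nonneg hα.le hε.le) hL.le, sq_nonneg (α*ε*(2+ε)*L)]
    have : α * μ ≤ α * L := mul_le_mul_of_nonneg_left hμL hα.le
    nlinarith
  -- the one-step contraction for the sums
  have hstep : ∀ t : ℕ, t < T →
      (∑ σ : Fin T → Fin n, ‖w σ (t+1) - wstar‖^2) ≤
        (1 - c) * ∑ σ : Fin T → Fin n, ‖w σ t - wstar‖^2 := by
    intro t ht
    set ti : Fin T := ⟨t, ht⟩ with hti
    set e := Equiv.funSplitAt ti (Fin n) with he
    have hsum : ∀ F : (Fin T → Fin n) → ℝ,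
        ∑ σ : Fin T → Fin n, F σ =
          ∑ g : {j : Fin T // j ≠ ti} → Fin n, ∑ a : Fin n, F (e.symm (a, g)) := by
      intro F
      rw [← Equiv.sum_comp e.symm F, Fintype.sum_prod_type, Finset.sum_comm]
    rw [hsum (fun σ => ‖w σ (t+1) - wstar‖^2), hsum (fun σ => ‖w σ t - wstar‖^2),
      Finset.mul_sum]
    apply Finset.sum_le_sum
    intro g _
    obtain ⟨a0⟩ : Nonempty (Fin n) := ⟨⟨0, hn⟩⟩
    set v : EuclideanSpace ℝ (Fin d) := w (e.symm (a0, g)) t with hv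
    have hoff : ∀ (a : Fin n) (i : Fin T) (hi : i ≠ ti), (e.symm (a, g)) i = g ⟨i, hi⟩ := by
      intro a i hi
      simp [he, Equiv.funSplitAt, Equiv.piSplitAt, hi]
    have hati : ∀ a : Fin n, (e.symm (a, g)) ti = a := by
      intro a
      simp [he, Equiv.funSplitAt, Equiv.piSplitAt]
    have hagree : ∀ a : Fin n, w (e.symm (a, g)) t = v := by
      intro a
      rw [hv]
      apply rsgd_w_agree hw0 hiter t (by omega)
      intro i hi
      have hine : i ≠ ti := by
        intro hcon
        rw [hcon] at hi
        simp only [hti] at hi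
        omega
      rw [hoff a i hine, hoff a0 i hine]
    have hit : ∀ a : Fin n, w (e.symm (a,g)) (t+1) - wstar =
        (v - wstar) - α • (show EuclideanSpace ℝ (Fin d) from
          WithLp.toLp 2 (fun j => Q ((Q ⟪x a, v - wstar⟫ • x a) j))) := by
      intro a
      have h1 := hiter (e.symm (a,g)) ti
      have hcoe : ((ti : Fin T) : ℕ) = t := rfl
      rw [hcoe] at h1
      rw [h1, hati a, hagree a, hy, sub_right_comm]
      congr 2
      rw [inner_sub_right]
    calc ∑ a : Fin n, ‖w (e.symm (a,g)) (t+1) - wstar‖^2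
        = ∑ a : Fin n, ‖(v - wstar) - α • (show EuclideanSpace ℝ (Fin d) from
            WithLp.toLp 2 (fun j => Q ((Q ⟪x a, v - wstar⟫ • x a) j)))‖^2 := by
          apply Finset.sum_congr rfl
          intro a _
          rw [hit a]
      _ ≤ (n:ℝ) * (1 - c) * ‖v - wstar‖^2 :=
          rsgd_avg_bound ε α L μ hε hL hα hαL' hn x hx heig Q hQ (v - wstar)
      _ = (1 - c) * ∑ a : Fin n, ‖w (e.symm (a,g)) t - wstar‖^2 := by
          rw [Finset.sum_congr rfl (fun a _ => by rw [hagree a]),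
            Finset.sum_const, Finset.card_univ, Fintype.card_fin, nsmul_eq_mul]
          ring
  -- iterate the contraction
  have hiterate : ∀ t : ℕ, t ≤ T →
      (∑ σ : Fin T → Fin n, ‖w σ t - wstar‖^2) ≤
        (1 - c)^t * ∑ σ : Fin T → Fin n, ‖w σ 0 - wstar‖^2 := by
    intro t
    induction t with
    | zero => intro _; simp
    | succ t ih =>
      intro ht
      calc ∑ σ : Fin T → Fin n, ‖w σ (t+1) - wstar‖^2
          ≤ (1 - c) * ∑ σ : Fin T → Fin n, ‖w σ t - wstar‖^2 := hstep t (by omega)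
        _ ≤ (1 - c) * ((1 - c)^t * ∑ σ : Fin T → Fin n, ‖w σ 0 - wstar‖^2) :=
            mul_le_mul_of_nonneg_left (ih (by omega)) h1c
        _ = (1 - c)^(t+1) * ∑ σ : Fin T → Fin n, ‖w σ 0 - wstar‖^2 := by ring
  have hS0 : ∑ σ : Fin T → Fin n, ‖w σ 0 - wstar‖^2 = (n:ℝ)^T * ‖w0 - wstar‖^2 := by
    rw [Finset.sum_congr rfl (fun σ _ => by rw [hw0 σ]), Finset.sum_const, Finset.card_univ,
      Fintype.card_fun, Fintype.card_fin, Fintype.card_fin, nsmul_eq_mul]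
    push_cast
    ring
  have hfin := hiterate T le_rfl
  rw [hS0] at hfin
  have hpow : (1 - c)^T ≤ Real.exp (-(T:ℝ) * c) := by
    have h1 : 1 - c ≤ Real.exp (-c) := by
      have := Real.add_one_le_exp (-c)
      linarith
    calc (1 - c)^T ≤ (Real.exp (-c))^T := pow_le_pow_left₀ h1c h1 T
      _ = Real.exp (-(T:ℝ) * c) := by
        rw [← Real.exp_nat_mul]
        ring_nf
  have hnT : (0:ℝ) < (n:ℝ)^T := by positivity
  calc (1 / (n : ℝ) ^ T) * ∑ σ : Fin T → Fin n, ‖w σ T - wstar‖ ^ 2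
      ≤ (1 / (n : ℝ) ^ T) * ((1 - c)^T * ((n:ℝ)^T * ‖w0 - wstar‖^2)) := by
        apply mul_le_mul_of_nonneg_left hfin (by positivity)
    _ = (1 - c)^T * ‖w0 - wstar‖^2 := by field_simp
    _ ≤ Real.exp (-(T:ℝ) * c) * ‖w0 - wstar‖^2 :=
        mul_le_mul_of_nonneg_right hpow (sq_nonneg _)
end
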